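/- Let f : ℤ₂ → ℤ₂ be a 1-Lipschitz map and let g : ℤ₂ → ℤ₂ be a derivative of f modulo 8 with parameter K. If x, x' ∈ ℤ₂ satisfy x ≡ x' (mod 2^K), then for every i ≥ 0 one has ∏_{j=0}^{i−1} g(f^[j](x)) ≡ ∏_{j=0}^{i−1} g(f^[j](x')) (mod 8), i.e. ‖∏_{j=0}^{i−1} g(f^[j](x)) − ∏_{j=0}^{i−1} g(f^[j](x'))‖ ≤ 2^(−3). -/

import Mathlib

open Function Finset

/-- `a ≡ b (mod 2^s)` in the 2-adic integers. -/
def CongMod (s : ℕ) (a b : ℤ_[2]) : Prop := ‖a - b‖ ≤ ((2 : ℝ) ^ s)⁻¹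

/-- `f` is 1-Lipschitz for the 2-adic norm (a T-function). -/
def OneLip (f : ℤ_[2] → ℤ_[2]) : Prop := ∀ a b : ℤ_[2], ‖f a - f b‖ ≤ ‖a - b‖

/-- `f` is transitive modulo `2^n`. -/
def TransMod (f : ℤ_[2] → ℤ_[2]) (n : ℕ) : Prop :=
  ∀ x y : ℤ_[2], ∃ i < 2 ^ n, CongMod n (f^[i] x) y

/-- `f` is transitive (single cycle modulo every power of 2). -/
def TransitiveT (f : ℤ_[2] → ℤ_[2]) : Prop := ∀ n : ℕ, 1 ≤ n → TransMod f n

/-- `f` is bijective modulo `2^n`. -/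
def BijMod (f : ℤ_[2] → ℤ_[2]) (n : ℕ) : Prop :=
  (∀ a b : ℤ_[2], CongMod n (f a) (f b) → CongMod n a b) ∧
  (∀ y : ℤ_[2], ∃ x : ℤ_[2], CongMod n (f x) y)

/-- `f` is bijective (measure-preserving T-function). -/
def BijectiveT (f : ℤ_[2] → ℤ_[2]) : Prop := ∀ n : ℕ, 1 ≤ n → BijMod f n

/-- `g` is a derivative of `f` modulo `2^M` with parameter `K`. -/
def IsDerivMod (f g : ℤ_[2] → ℤ_[2]) (M K : ℕ) : Prop :=
  ∀ x h : ℤ_[2], ‖h‖ ≤ ((2 : ℝ) ^ K)⁻¹ →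
    ‖f (x + h) - f x - g x * h‖ ≤ ((2 : ℝ) ^ M)⁻¹ * ‖h‖

/-- The `n`-th binary digit of a 2-adic integer, as an element of `ZMod 2`.
`PadicInt.appr x n` is the unique integer in `{0, …, 2^n - 1}` congruent to `x` mod `2^n`. -/
noncomputable def delta (n : ℕ) (x : ℤ_[2]) : ZMod 2 :=
  (((x.appr (n + 1) - x.appr n) / 2 ^ n : ℕ) : ZMod 2)


set_option maxHeartbeats 1000000

lemma padic_norm_sub_max (a b : ℤ_[2]) : ‖a - b‖ ≤ max ‖a‖ ‖b‖ := by
  simpa [sub_eq_add_neg] using PadicInt.nonarchimedean a (-b)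

lemma g_cong_aux (f g : ℤ_[2] → ℤ_[2]) (K : ℕ)
    (hg : IsDerivMod f g 3 K) (x x' : ℤ_[2])
    (h : ‖x - x'‖ ≤ ((2:ℝ)^K)⁻¹) : ‖g x - g x'‖ ≤ ((2:ℝ)^(3:ℕ))⁻¹ := by
  set d : ℤ_[2] := x' - x with hd_def
  set t : ℤ_[2] := (2:ℤ_[2])^K with ht_def
  have ht : ‖t‖ = ((2:ℝ)^K)⁻¹ := by
    rw [ht_def]
    have h2 : ‖(2:ℤ_[2])‖ = ((2:ℝ))⁻¹ := by
      simpa using @PadicInt.norm_p 2 _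
    rw [norm_pow, h2, inv_pow]
  have hd : ‖d‖ ≤ ((2:ℝ)^K)⁻¹ := by rw [hd_def, norm_sub_rev]; exact h
  have hdt : ‖d + t‖ ≤ ((2:ℝ)^K)⁻¹ :=
    le_trans (PadicInt.nonarchimedean _ _) (max_le hd ht.le)
  have hA := hg x (d + t) hdt
  have hB := hg x d hd
  have hC := hg x' t ht.le
  have key : (g x' - g x) * t =
      (f (x + (d + t)) - f x - g x * (d + t)) - (f (x + d) - f x - g x * d)
        - (f (x' + t) - f x' - g x' * t) := by
    have h1 : x + (d + t) = x' + t := by rw [hd_def]; ring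
    have h2 : x + d = x' := by rw [hd_def]; ring
    rw [h1, h2]; ring
  have hbound : ‖(g x' - g x) * t‖ ≤ ((2:ℝ)^(3:ℕ))⁻¹ * ((2:ℝ)^K)⁻¹ := by
    rw [key]
    refine le_trans (padic_norm_sub_max _ _)
      (max_le (le_trans (padic_norm_sub_max _ _) (max_le ?_ ?_)) ?_)
    · exact le_trans hA (mul_le_mul_of_nonneg_left hdt (by positivity))
    · exact le_trans hB (mul_le_mul_of_nonneg_left hd (by positivity))
    · exact le_trans hC (mul_le_mul_of_nonneg_left ht.le (by positivity))
  rw [norm_mul, ht] at hbound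
  have hpos : (0:ℝ) < ((2:ℝ)^K)⁻¹ := by positivity
  have := (mul_le_mul_iff_of_pos_right hpos).mp hbound
  rwa [norm_sub_rev]

/-- The derivative of the `i`-th iterate modulo 8 depends on the point only
modulo `2^K`. -/
theorem iterate_deriv_congr (f g : ℤ_[2] → ℤ_[2]) (K : ℕ)
    (hf : OneLip f) (hg : IsDerivMod f g 3 K) (x x' : ℤ_[2]) (hxx' : CongMod K x x') :
    ∀ i : ℕ,
      ‖(∏ j ∈ Finset.range i, g (f^[j] x)) -
        ∏ j ∈ Finset.range i, g (f^[j] x')‖ ≤ ((2 : ℝ) ^ (3 : ℕ))⁻¹ := by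
  have hxx'' : ‖x - x'‖ ≤ ((2:ℝ)^K)⁻¹ := hxx'
  have hiter : ∀ i : ℕ, ‖f^[i] x - f^[i] x'‖ ≤ ((2:ℝ)^K)⁻¹ := by
    intro i
    induction i with
    | zero => simpa using hxx''
    | succ n ih =>
      rw [Function.iterate_succ_apply', Function.iterate_succ_apply']
      exact le_trans (hf _ _) ih
  intro i
  induction i with
  | zero => simp
  | succ n ih =>
    rw [Finset.prod_range_succ, Finset.prod_range_succ]
    set P := ∏ j ∈ Finset.range n, g (f^[j] x)
    set Q := ∏ j ∈ Finset.range n, g (f^[j] x')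
    have heq : P * g (f^[n] x) - Q * g (f^[n] x') =
        P * (g (f^[n] x) - g (f^[n] x')) + (P - Q) * g (f^[n] x') := by ring
    rw [heq]
    refine le_trans (PadicInt.nonarchimedean _ _) (max_le ?_ ?_)
    · rw [norm_mul]
      calc ‖P‖ * ‖g (f^[n] x) - g (f^[n] x')‖
          ≤ 1 * ((2:ℝ)^(3:ℕ))⁻¹ :=
            mul_le_mul (PadicInt.norm_le_one P)
              (g_cong_aux f g K hg _ _ (hiter n)) (norm_nonneg _) zero_le_one
        _ = ((2:ℝ)^(3:ℕ))⁻¹ := one_mul _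
    · rw [norm_mul]
      calc ‖P - Q‖ * ‖g (f^[n] x')‖ ≤ ((2:ℝ)^(3:ℕ))⁻¹ * 1 :=
            mul_le_mul ih (PadicInt.norm_le_one _) (norm_nonneg _) (by positivity)
        _ = ((2:ℝ)^(3:ℕ))⁻¹ := mul_one _
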